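/- Let n, ℓ, δ be positive integers with 2δ < ℓ ≤ n/2, ℓ ∣ n and b = n/ℓ ≥ 2. Every code C ⊆ 𝔽₂ⁿ that detects up to δ deletions per block satisfies |C| ≤ 2^{n−2δ(b−1)}; that is, the redundancy of any such code is at least 2δ(n/ℓ − 1). -/

import Mathlib

/-- The `i`-th bit (0-indexed) of `x ∈ 𝔽₂ⁿ`, with default `false` out of range. -/
def bitAt (n : ℕ) (x : Fin n → Bool) (i : ℕ) : Bool :=
  if h : i < n then x ⟨i, h⟩ else false

/-- The `j`-th block (1-indexed, of length `ℓ`) of `x ∈ 𝔽₂ⁿ`, as a list. -/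
def blockList (n ℓ : ℕ) (x : Fin n → Bool) (j : ℕ) : List Bool :=
  (List.range ℓ).map (fun i => bitAt n x ((j - 1) * ℓ + i))

/-- `y` is a `δ`-per-block deletion output of `x` with deletion pattern `d`:
`y = ⟨y¹,…,y^b⟩` where each `y^j` is a subsequence of block `j` of `x`
of length `ℓ - d j`, with `d j ≤ δ`. -/
def IsDelOutput (n ℓ δ : ℕ) (x : Fin n → Bool) (d : ℕ → ℕ) (y : List Bool) : Prop :=
  ∃ ys : ℕ → List Bool,
    (∀ j ∈ Finset.Icc 1 (n / ℓ),
      (ys j).Sublist (blockList n ℓ x j) ∧ d j ≤ δ ∧ (ys j).length = ℓ - d j) ∧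
    y = ((List.range (n / ℓ)).map (fun j => ys (j + 1))).flatten

/-- `C ⊆ 𝔽₂ⁿ` detects up to `δ` deletions per block. -/
def Detects (n ℓ δ : ℕ) (C : Set (Fin n → Bool)) : Prop :=
  ∀ x ∈ C, ∀ x' ∈ C, ∀ d d' : ℕ → ℕ, ∀ y : List Bool,
    IsDelOutput n ℓ δ x d y → IsDelOutput n ℓ δ x' d' y →
    ∀ j ∈ Finset.Icc 1 (n / ℓ), d j = d' j

/-- The 0-indexed starting position `α_j - 1` of block `j` in the output,
given the deletion pattern `d`. -/
def startIdx (ℓ : ℕ) (d : ℕ → ℕ) (j : ℕ) : ℕ :=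
  ∑ m ∈ Finset.Icc 1 (j - 1), (ℓ - d m)

/-- The window `(y_{α_j},…,y_{α_j+ℓ-1})` of length `ℓ` of the list `y`
starting at 0-indexed position `s = α_j - 1`. -/
def window (ℓ : ℕ) (y : List Bool) (s : ℕ) : Fin ℓ → Bool :=
  fun i => y.getD (s + i) false

/-- `C` is block-by-block decodable. -/
def BlockDecodable (n ℓ δ : ℕ) (C : Set (Fin n → Bool)) : Prop :=
  ∃ f : ℕ → (Fin ℓ → Bool) → ℕ,
    (∀ j w, f j w ≤ δ) ∧
    ∀ x ∈ C, ∀ d : ℕ → ℕ, ∀ y : List Bool, IsDelOutput n ℓ δ x d y →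
      ∀ j ∈ Finset.Icc 1 (n / ℓ - 1),
        f j (window ℓ y (startIdx ℓ d j)) = d j

def seg (n : ℕ) (x : Fin n → Bool) (s len : ℕ) : List Bool :=
  (List.range len).map (fun t => bitAt n x (s + t))

@[simp] lemma seg_length {n : ℕ} (x : Fin n → Bool) (s len : ℕ) :
    (seg n x s len).length = len := by simp [seg]

lemma seg_append {n : ℕ} (x : Fin n → Bool) (s p q : ℕ) :
    seg n x s (p + q) = seg n x s p ++ seg n x (s + p) q := by
  unfold seg
  rw [List.range_add, List.map_append, List.map_map]
  congr 1
  apply List.map_congr_left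
  intro a _
  simp [add_assoc]

@[simp] lemma seg_one {n : ℕ} (x : Fin n → Bool) (s : ℕ) :
    seg n x s 1 = [bitAt n x s] := by
  have h1 : List.range 1 = [0] := rfl
  simp [seg, h1]

lemma blockList_eq_seg (n ℓ : ℕ) (x : Fin n → Bool) (j : ℕ) :
    blockList n ℓ x j = seg n x ((j - 1) * ℓ) ℓ := rfl

@[simp] lemma blockList_length (n ℓ : ℕ) (x : Fin n → Bool) (j : ℕ) :
    (blockList n ℓ x j).length = ℓ := by simp [blockList]

lemma seg_take {n : ℕ} (x : Fin n → Bool) {s p len : ℕ} (h : p ≤ len) :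
    (seg n x s len).take p = seg n x s p := by
  have : len = p + (len - p) := by omega
  rw [this, seg_append]
  exact List.take_left' (seg_length x s p)

lemma seg_drop {n : ℕ} (x : Fin n → Bool) {s p len : ℕ} (h : p ≤ len) :
    (seg n x s len).drop p = seg n x (s + p) (len - p) := by
  have : len = p + (len - p) := by omega
  rw [this, seg_append]
  have : p + (len - p) - p = len - p := by omega
  rw [this]
  exact List.drop_left' (seg_length x s p)

lemma seg_congr {n : ℕ} {x x' : Fin n → Bool} {s s' len : ℕ}
    (h : ∀ t < len, bitAt n x (s + t) = bitAt n x' (s' + t)) :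
    seg n x s len = seg n x' s' len := by
  unfold seg
  apply List.map_congr_left
  intro a ha
  exact h a (List.mem_range.1 ha)

lemma seg_shift {n : ℕ} (x : Fin n → Bool) {s s' len : ℕ} (h : s = s') :
    seg n x s len = seg n x s' len := by rw [h]

lemma seg_const {n : ℕ} {x : Fin n → Bool} {s len : ℕ} {c : Bool}
    (h : ∀ t < len, bitAt n x (s + t) = c) :
    seg n x s len = List.replicate len c := by
  apply List.eq_replicate_iff.2
  refine ⟨by simp, ?_⟩
  intro b hb
  simp only [seg, List.mem_map, List.mem_range] at hb
  obtain ⟨t, ht, rfl⟩ := hb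
  exact h t ht

lemma flatten_pair {b p : ℕ} (hp : p + 1 < b) (g g' : ℕ → List Bool)
    (h1 : ∀ m, m ≠ p → m ≠ p + 1 → g m = g' m)
    (h2 : g p ++ g (p + 1) = g' p ++ g' (p + 1)) :
    ((List.range b).map g).flatten = ((List.range b).map g').flatten := by
  have hb : b = (p + 2) + (b - (p + 2)) := by omega
  rw [hb, List.range_add]
  have hr : List.range (p + 2) = List.range p ++ [p, p + 1] := by
    rw [List.range_succ, List.range_succ]; simp
  rw [hr]
  simp only [List.map_append, List.flatten_append, List.map_map]
  have e1 : List.map g (List.range p) = List.map g' (List.range p) := by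
    apply List.map_congr_left
    intro a ha
    have := List.mem_range.1 ha
    exact h1 a (by omega) (by omega)
  have e2 : List.map (g ∘ fun x => p + 2 + x) (List.range (b - (p + 2))) =
      List.map (g' ∘ fun x => p + 2 + x) (List.range (b - (p + 2))) := by
    apply List.map_congr_left
    intro a _
    simp only [Function.comp]
    exact h1 _ (by omega) (by omega)
  rw [e1, e2]
  congr 1
  congr 1
  simpa using h2

lemma seg_split_last {n : ℕ} (x : Fin n → Bool) (s len : ℕ) (h : 1 ≤ len) :
    seg n x s len = seg n x s (len - 1) ++ [bitAt n x (s + (len - 1))] := by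
  conv_lhs => rw [show len = (len - 1) + 1 from by omega]
  rw [seg_append, seg_one]

lemma seg_split_first {n : ℕ} (x : Fin n → Bool) (s len : ℕ) (h : 1 ≤ len) :
    seg n x s len = bitAt n x s :: seg n x (s + 1) (len - 1) := by
  conv_lhs => rw [show len = 1 + (len - 1) from by omega]
  rw [seg_append, seg_one, List.singleton_append]

lemma seg_split_at {n : ℕ} (x : Fin n → Bool) (s len p : ℕ) (h : p ≤ len) :
    seg n x s len = seg n x s p ++ seg n x (s + p) (len - p) := by
  conv_lhs => rw [show len = p + (len - p) from by omega]
  rw [seg_append]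

section Claims

variable {n ℓ δ : ℕ} {C : Set (Fin n → Bool)}

lemma claimA (hδ : 0 < δ) (hℓ : 2 * δ < ℓ)
    (hC : Detects n ℓ δ C) {x : Fin n → Bool} (hx : x ∈ C)
    {j : ℕ} (hj1 : 1 ≤ j) (hj2 : j + 1 ≤ n / ℓ)
    {i : ℕ} (hi1 : 1 ≤ i) (hi2 : i ≤ δ) :
    bitAt n x (j * ℓ + i - 1) ≠ bitAt n x (j * ℓ - 1) := by
  intro heq
  have hℓ1 : 1 ≤ ℓ := by omega
  have hle : ℓ ≤ j * ℓ := Nat.le_mul_of_pos_left ℓ (by omega)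
  have hm1 : (j - 1) * ℓ = j * ℓ - ℓ := by rw [Nat.sub_mul, one_mul]
  have hm2 : (j + 1 - 1) * ℓ = j * ℓ := by simp
  set b := n / ℓ with hb
  set d : ℕ → ℕ := fun m => if m = j + 1 then i else 0 with hd
  set d' : ℕ → ℕ := fun m => if m = j then 1 else if m = j + 1 then i - 1 else 0 with hd'
  set ys : ℕ → List Bool :=
    fun m => if m = j + 1 then (blockList n ℓ x (j + 1)).drop i else blockList n ℓ x m with hys
  set ys' : ℕ → List Bool :=
    fun m => if m = j then (blockList n ℓ x j).take (ℓ - 1)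
      else if m = j + 1 then (blockList n ℓ x (j + 1)).drop (i - 1)
      else blockList n ℓ x m with hys'
  set y : List Bool := ((List.range b).map (fun m => ys (m + 1))).flatten with hy
  have hne : j ≠ j + 1 := by omega
  have hout1 : IsDelOutput n ℓ δ x d y := by
    refine ⟨ys, ?_, rfl⟩
    intro m _
    by_cases hmj : m = j + 1
    · rw [hmj]
      have e1 : ys (j + 1) = (blockList n ℓ x (j + 1)).drop i := by simp [hys]
      have e2 : d (j + 1) = i := by simp [hd]
      rw [e1, e2]
      exact ⟨List.drop_sublist _ _, hi2,
        by simp only [List.length_drop, blockList_length]⟩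
    · have e1 : ys m = blockList n ℓ x m := by simp [hys, hmj]
      have e2 : d m = 0 := by simp [hd, hmj]
      rw [e1, e2]
      exact ⟨List.Sublist.refl _, by omega, by simp⟩
  have hout2 : IsDelOutput n ℓ δ x d' y := by
    refine ⟨ys', ?_, ?_⟩
    · intro m _
      beta_reduce
      by_cases hmj : m = j
      · rw [hmj]
        have e1 : ys' j = (blockList n ℓ x j).take (ℓ - 1) := by simp [hys']
        have e2 : d' j = 1 := by simp [hd']
        rw [e1, e2]
        refine ⟨List.take_sublist _ _, by omega, ?_⟩
        simp only [List.length_take, blockList_length]; omega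
      · by_cases hmj1 : m = j + 1
        · rw [hmj1]
          have e1 : ys' (j + 1) = (blockList n ℓ x (j + 1)).drop (i - 1) := by
            simp [hys', hne.symm]
          have e2 : d' (j + 1) = i - 1 := by simp [hd', hne.symm]
          rw [e1, e2]
          refine ⟨List.drop_sublist _ _, by omega, ?_⟩
          simp only [List.length_drop, blockList_length]
        · have e1 : ys' m = blockList n ℓ x m := by simp [hys', hmj, hmj1]
          have e2 : d' m = 0 := by simp [hd', hmj, hmj1]
          rw [e1, e2]
          exact ⟨List.Sublist.refl _, by omega, by simp⟩
    · rw [hy]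
      apply flatten_pair (p := j - 1) (by omega)
      · intro m hma hmb
        have e1 : m + 1 ≠ j := by omega
        have e2 : m + 1 ≠ j + 1 := by omega
        have e3 : m ≠ j := by omega
        simp [hys, hys', e1, e2, e3]
      · show ys (j - 1 + 1) ++ ys (j - 1 + 1 + 1) = ys' (j - 1 + 1) ++ ys' (j - 1 + 1 + 1)
        have hjj : j - 1 + 1 = j := by omega
        rw [hjj]
        have a1 : ys j = blockList n ℓ x j := by simp [hys, hne]
        have a2 : ys (j + 1) = (blockList n ℓ x (j + 1)).drop i := by simp [hys]
        have a3 : ys' j = (blockList n ℓ x j).take (ℓ - 1) := by simp [hys']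
        have a4 : ys' (j + 1) = (blockList n ℓ x (j + 1)).drop (i - 1) := by
          simp [hys', hne.symm]
        rw [a1, a2, a3, a4, blockList_eq_seg, blockList_eq_seg n ℓ x (j + 1), hm2,
          seg_take x (by omega : ℓ - 1 ≤ ℓ), seg_drop x (by omega : i ≤ ℓ),
          seg_drop x (by omega : i - 1 ≤ ℓ),
          seg_split_last x ((j - 1) * ℓ) ℓ (by omega),
          seg_split_first x (j * ℓ + (i - 1)) (ℓ - (i - 1)) (by omega)]
        rw [show j * ℓ + (i - 1) + 1 = j * ℓ + i from by omega,
          show ℓ - (i - 1) - 1 = ℓ - i from by omega,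
          show j * ℓ + (i - 1) = j * ℓ + i - 1 from by omega,
          show (j - 1) * ℓ + (ℓ - 1) = j * ℓ - 1 from by omega, heq]
        simp
  have hthis := hC x hx x hx d d' y hout1 hout2 j (by simp only [Finset.mem_Icc]; omega)
  have e1 : d j = 0 := by simp [hd, hne]
  have e2 : d' j = 1 := by simp [hd']
  omega

lemma claimB (hδ : 0 < δ) (hℓ : 2 * δ < ℓ)
    (hC : Detects n ℓ δ C) {x : Fin n → Bool} (hx : x ∈ C)
    {j : ℕ} (hj1 : 1 ≤ j) (hj2 : j + 1 ≤ n / ℓ)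
    {i : ℕ} (hi1 : 1 ≤ i) (hi2 : i ≤ δ) :
    bitAt n x (j * ℓ - i) ≠ bitAt n x (j * ℓ) := by
  intro heq
  have hℓ1 : 1 ≤ ℓ := by omega
  have hle : ℓ ≤ j * ℓ := Nat.le_mul_of_pos_left ℓ (by omega)
  have hm1 : (j - 1) * ℓ = j * ℓ - ℓ := by rw [Nat.sub_mul, one_mul]
  have hm2 : (j + 1 - 1) * ℓ = j * ℓ := by simp
  set b := n / ℓ with hb
  set d : ℕ → ℕ := fun m => if m = j then i - 1 else if m = j + 1 then 1 else 0 with hd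
  set d' : ℕ → ℕ := fun m => if m = j then i else 0 with hd'
  set ys : ℕ → List Bool :=
    fun m => if m = j then (blockList n ℓ x j).take (ℓ - (i - 1))
      else if m = j + 1 then (blockList n ℓ x (j + 1)).drop 1
      else blockList n ℓ x m with hys
  set ys' : ℕ → List Bool :=
    fun m => if m = j then (blockList n ℓ x j).take (ℓ - i) else blockList n ℓ x m with hys'
  set y : List Bool := ((List.range b).map (fun m => ys (m + 1))).flatten with hy
  have hne : j ≠ j + 1 := by omega
  have hout1 : IsDelOutput n ℓ δ x d y := by
    refine ⟨ys, ?_, rfl⟩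
    intro m _
    by_cases hmj : m = j
    · rw [hmj]
      have e1 : ys j = (blockList n ℓ x j).take (ℓ - (i - 1)) := by simp [hys]
      have e2 : d j = i - 1 := by simp [hd]
      rw [e1, e2]
      refine ⟨List.take_sublist _ _, by omega, ?_⟩
      simp only [List.length_take, blockList_length]; omega
    · by_cases hmj1 : m = j + 1
      · rw [hmj1]
        have e1 : ys (j + 1) = (blockList n ℓ x (j + 1)).drop 1 := by simp [hys, hne.symm]
        have e2 : d (j + 1) = 1 := by simp [hd, hne.symm]
        rw [e1, e2]
        exact ⟨List.drop_sublist _ _, by omega,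
          by simp only [List.length_drop, blockList_length]⟩
      · have e1 : ys m = blockList n ℓ x m := by simp [hys, hmj, hmj1]
        have e2 : d m = 0 := by simp [hd, hmj, hmj1]
        rw [e1, e2]
        exact ⟨List.Sublist.refl _, by omega, by simp⟩
  have hout2 : IsDelOutput n ℓ δ x d' y := by
    refine ⟨ys', ?_, ?_⟩
    · intro m _
      beta_reduce
      by_cases hmj : m = j
      · rw [hmj]
        have e1 : ys' j = (blockList n ℓ x j).take (ℓ - i) := by simp [hys']
        have e2 : d' j = i := by simp [hd']
        rw [e1, e2]
        refine ⟨List.take_sublist _ _, by omega, ?_⟩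
        simp only [List.length_take, blockList_length]; omega
      · have e1 : ys' m = blockList n ℓ x m := by simp [hys', hmj]
        have e2 : d' m = 0 := by simp [hd', hmj]
        rw [e1, e2]
        exact ⟨List.Sublist.refl _, by omega, by simp⟩
    · rw [hy]
      apply flatten_pair (p := j - 1) (by omega)
      · intro m hma hmb
        have e1 : m + 1 ≠ j := by omega
        have e2 : m + 1 ≠ j + 1 := by omega
        have e3 : m ≠ j := by omega
        simp [hys, hys', e1, e2, e3]
      · show ys (j - 1 + 1) ++ ys (j - 1 + 1 + 1) = ys' (j - 1 + 1) ++ ys' (j - 1 + 1 + 1)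
        have hjj : j - 1 + 1 = j := by omega
        rw [hjj]
        have a1 : ys j = (blockList n ℓ x j).take (ℓ - (i - 1)) := by simp [hys]
        have a2 : ys (j + 1) = (blockList n ℓ x (j + 1)).drop 1 := by simp [hys, hne.symm]
        have a3 : ys' j = (blockList n ℓ x j).take (ℓ - i) := by simp [hys']
        have a4 : ys' (j + 1) = blockList n ℓ x (j + 1) := by simp [hys', hne.symm]
        rw [a1, a2, a3, a4, blockList_eq_seg, blockList_eq_seg n ℓ x (j + 1), hm2,
          seg_take x (by omega : ℓ - (i - 1) ≤ ℓ), seg_take x (by omega : ℓ - i ≤ ℓ),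
          seg_drop x (by omega : 1 ≤ ℓ),
          seg_split_last x ((j - 1) * ℓ) (ℓ - (i - 1)) (by omega),
          seg_split_first x (j * ℓ) ℓ (by omega)]
        rw [show (j - 1) * ℓ + (ℓ - (i - 1) - 1) = j * ℓ - i from by omega,
          show ℓ - (i - 1) - 1 = ℓ - i from by omega, heq]
        simp
  have hthis := hC x hx x hx d d' y hout1 hout2 (j + 1)
    (by simp only [Finset.mem_Icc]; omega)
  have e1 : d (j + 1) = 1 := by simp [hd, hne.symm]
  have e2 : d' (j + 1) = 0 := by simp [hd', hne.symm]
  omega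

end Claims

lemma bool_resolve {a c : Bool} (h : ¬a = c) : a = !c := by
  cases a <;> cases c <;> simp_all

section WS

variable {n ℓ δ : ℕ} {C : Set (Fin n → Bool)}

lemma ws1 (hδ : 0 < δ) (hℓ : 2 * δ < ℓ)
    (hC : Detects n ℓ δ C) {x : Fin n → Bool} (hx : x ∈ C)
    {j : ℕ} (hj1 : 1 ≤ j) (hj2 : j + 1 ≤ n / ℓ) {t : ℕ} (ht : t < δ) :
    bitAt n x (j * ℓ - 1 - t) = bitAt n x (j * ℓ - 1) := by
  have hle : ℓ ≤ j * ℓ := Nat.le_mul_of_pos_left ℓ (by omega)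
  have h1 : bitAt n x (j * ℓ - (t + 1)) ≠ bitAt n x (j * ℓ) :=
    claimB hδ hℓ hC hx hj1 hj2 (by omega) (by omega)
  have h2 : bitAt n x (j * ℓ + 1 - 1) ≠ bitAt n x (j * ℓ - 1) :=
    claimA hδ hℓ hC hx hj1 hj2 le_rfl hδ
  rw [show j * ℓ + 1 - 1 = j * ℓ from by omega] at h2
  rw [show j * ℓ - 1 - t = j * ℓ - (t + 1) from by omega]
  have e1 := bool_resolve h1
  have e2 := bool_resolve h2
  rw [e1, e2]
  simp

lemma ws2 (hδ : 0 < δ) (hℓ : 2 * δ < ℓ)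
    (hC : Detects n ℓ δ C) {x : Fin n → Bool} (hx : x ∈ C)
    {j : ℕ} (hj1 : 1 ≤ j) (hj2 : j + 1 ≤ n / ℓ) {t : ℕ} (ht : t < δ) :
    bitAt n x (j * ℓ + t) = !(bitAt n x (j * ℓ - 1)) := by
  have h1 : bitAt n x (j * ℓ + (t + 1) - 1) ≠ bitAt n x (j * ℓ - 1) :=
    claimA hδ hℓ hC hx hj1 hj2 (by omega) (by omega)
  rw [show j * ℓ + (t + 1) - 1 = j * ℓ + t from by omega] at h1
  exact bool_resolve h1

lemma prefix_win (hδ : 0 < δ) (hℓ : 2 * δ < ℓ)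
    (hC : Detects n ℓ δ C) {x : Fin n → Bool} (hx : x ∈ C)
    {j : ℕ} (hj1 : 1 ≤ j) (hj2 : j + 1 ≤ n / ℓ) :
    seg n x (j * ℓ) δ = List.replicate δ (!(bitAt n x (j * ℓ - 1))) :=
  seg_const (fun t ht => ws2 hδ hℓ hC hx hj1 hj2 ht)

lemma suffix_win (hδ : 0 < δ) (hℓ : 2 * δ < ℓ)
    (hC : Detects n ℓ δ C) {x : Fin n → Bool} (hx : x ∈ C)
    {j : ℕ} (hj1 : 1 ≤ j) (hj2 : j + 1 ≤ n / ℓ) :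
    seg n x (j * ℓ - δ) δ = List.replicate δ (bitAt n x (j * ℓ - 1)) := by
  apply seg_const
  intro t ht
  have hle : ℓ ≤ j * ℓ := Nat.le_mul_of_pos_left ℓ (by omega)
  rw [show j * ℓ - δ + t = j * ℓ - 1 - (δ - 1 - t) from by omega]
  exact ws1 hδ hℓ hC hx hj1 hj2 (by omega)

end WS

section Inj

variable {n ℓ δ : ℕ} {C : Set (Fin n → Bool)}

lemma agree_of_detects (hδ : 0 < δ) (hℓ : 2 * δ < ℓ) (hdvd : ℓ ∣ n) (hb : 2 ≤ n / ℓ)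
    (hC : Detects n ℓ δ C) {x x' : Fin n → Bool} (hx : x ∈ C) (hx' : x' ∈ C)
    (hoff : ∀ i : ℕ,
      (∀ j : ℕ, 1 ≤ j → j + 1 ≤ n / ℓ → i < j * ℓ - δ ∨ j * ℓ + δ ≤ i) →
      bitAt n x i = bitAt n x' i) :
    ∀ i : ℕ, bitAt n x i = bitAt n x' i := by
  classical
  have hℓ1 : 1 ≤ ℓ := by omega
  set b := n / ℓ with hbdef
  have hbn : b * ℓ = n := Nat.div_mul_cancel hdvd
  -- off-window helper for interiors
  have hmid : ∀ m : ℕ, m + 1 ≤ b → ∀ t : ℕ, t < ℓ - 2 * δ →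
      bitAt n x (m * ℓ + δ + t) = bitAt n x' (m * ℓ + δ + t) := by
    intro m hm t ht
    apply hoff
    intro j hj1 hj2
    rcases le_or_gt j m with h | h
    · right
      have : j * ℓ ≤ m * ℓ := Nat.mul_le_mul_right ℓ h
      omega
    · left
      have h1 : (m + 1) * ℓ ≤ j * ℓ := Nat.mul_le_mul_right ℓ h
      rw [Nat.succ_mul] at h1
      omega
  -- off-window: global prefix (before first boundary)
  have hpre0 : ∀ t : ℕ, t < δ → bitAt n x t = bitAt n x' t := by
    intro t ht
    apply hoff
    intro j hj1 hj2
    left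
    have : 1 * ℓ ≤ j * ℓ := Nat.mul_le_mul_right ℓ hj1
    omega
  -- off-window: global suffix (after last boundary)
  have hsufb : ∀ t : ℕ, t < δ → bitAt n x (b * ℓ - δ + t) = bitAt n x' (b * ℓ - δ + t) := by
    intro t ht
    apply hoff
    intro j hj1 hj2
    right
    have h1 : j * ℓ + ℓ ≤ b * ℓ := by
      have := Nat.mul_le_mul_right ℓ (show j + 1 ≤ b from hj2)
      rwa [Nat.succ_mul] at this
    omega
  -- deletion patterns
  set d : ℕ → ℕ := fun m =>
    if 1 ≤ m ∧ m + 1 ≤ b ∧ ¬ bitAt n x (m * ℓ - 1) = bitAt n x' (m * ℓ - 1) then δ else 0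
    with hd
  have hd_cases : ∀ m, d m = δ ∨ d m = 0 := by
    intro m; simp only [hd]; split <;> simp
  have hd_spec : ∀ m, d m = δ →
      1 ≤ m ∧ m + 1 ≤ b ∧ ¬ bitAt n x (m * ℓ - 1) = bitAt n x' (m * ℓ - 1) := by
    intro m hm
    simp only [hd] at hm
    by_contra hcon
    rw [if_neg hcon] at hm
    omega
  have hd_diff : ∀ m, 1 ≤ m → m + 1 ≤ b →
      ¬ bitAt n x (m * ℓ - 1) = bitAt n x' (m * ℓ - 1) → d m = δ := by
    intro m h1 h2 h3
    simp only [hd]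
    rw [if_pos ⟨h1, h2, h3⟩]
  have hd0 : d 0 = 0 := by simp [hd]
  have hdb : ∀ m, b ≤ m → d m = 0 := by
    intro m hm
    simp only [hd]
    rw [if_neg]
    rintro ⟨h1, h2, h3⟩
    omega
  set ys : ℕ → List Bool := fun m =>
    if d m = δ then (blockList n ℓ x m).take (ℓ - δ) else blockList n ℓ x m with hys
  set ys' : ℕ → List Bool := fun m =>
    if d (m - 1) = δ then (blockList n ℓ x' m).drop δ else blockList n ℓ x' m with hys'
  set y : List Bool := ((List.range b).map (fun m => ys (m + 1))).flatten with hy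
  have hout1 : IsDelOutput n ℓ δ x d y := by
    refine ⟨ys, ?_, rfl⟩
    intro m _
    rcases hd_cases m with h | h
    · have e1 : ys m = (blockList n ℓ x m).take (ℓ - δ) := by rw [hys]; simp only [if_pos h]
      rw [e1, h]
      refine ⟨List.take_sublist _ _, le_rfl, ?_⟩
      simp only [List.length_take, blockList_length]; omega
    · have e1 : ys m = blockList n ℓ x m := by
        rw [hys]; simp only []
        rw [if_neg (by omega)]
      rw [e1, h]
      exact ⟨List.Sublist.refl _, by omega, by simp⟩
  have hout2 : IsDelOutput n ℓ δ x' (fun m => d (m - 1)) y := by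
    refine ⟨ys', ?_, ?_⟩
    · intro m _
      beta_reduce
      rcases hd_cases (m - 1) with h | h
      · have e1 : ys' m = (blockList n ℓ x' m).drop δ := by
          simp only [hys']; rw [if_pos h]
        rw [e1, h]
        refine ⟨List.drop_sublist _ _, le_rfl, ?_⟩
        simp only [List.length_drop, blockList_length]
      · have e1 : ys' m = blockList n ℓ x' m := by
          simp only [hys']; rw [if_neg (by omega)]
        rw [e1, h]
        exact ⟨List.Sublist.refl _, by omega, by simp⟩
    · -- flatten equality via invariant induction
      rw [hy]
      have key : ∀ m, m ≤ b →
          ((List.range m).map (fun k => ys' (k + 1))).flatten =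
          ((List.range m).map (fun k => ys (k + 1))).flatten ++
            (if d m = δ then List.replicate δ (bitAt n x' (m * ℓ - 1)) else []) := by
        intro m
        induction m with
        | zero =>
            intro _
            simp only [List.range_zero, List.map_nil, List.flatten_nil, List.nil_append, hd0]
            rw [if_neg (by omega : ¬ (0 : ℕ) = δ)]
        | succ m ih =>
            intro hm1
            have ihm := ih (by omega)
            rw [List.range_succ, List.map_append, List.map_append,
              List.flatten_append, List.flatten_append, ihm]
            simp only [List.map_cons, List.map_nil, List.flatten_cons, List.flatten_nil,
              List.append_nil]
            rw [List.append_assoc, List.append_assoc]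
            congr 1
            -- core step: tail(m) ++ ys'(m+1) = ys(m+1) ++ tail(m+1)
            have hsucc : (m + 1) * ℓ = m * ℓ + ℓ := Nat.succ_mul m ℓ
            have hmm : (m + 1 - 1) * ℓ = m * ℓ := by simp
            have hBx : blockList n ℓ x (m + 1) = seg n x (m * ℓ) ℓ := by
              rw [blockList_eq_seg, hmm]
            have hBx' : blockList n ℓ x' (m + 1) = seg n x' (m * ℓ) ℓ := by
              rw [blockList_eq_seg, hmm]
            have hsm : m + 1 - 1 = m := by omega
            -- middle equality
            have hMid : seg n x (m * ℓ + δ) (ℓ - 2 * δ) = seg n x' (m * ℓ + δ) (ℓ - 2 * δ) := by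
              apply seg_congr
              intro t ht
              exact hmid m hm1 t ht
            -- T := seg x (mℓ) δ ++ seg x' (mℓ+δ) (ℓ-δ)
            have L1 : (if d m = δ then List.replicate δ (bitAt n x' (m * ℓ - 1)) else []) ++
                ys' (m + 1) = seg n x (m * ℓ) δ ++ seg n x' (m * ℓ + δ) (ℓ - δ) := by
              have hys'v : ys' (m + 1) =
                  if d m = δ then (blockList n ℓ x' (m + 1)).drop δ
                  else blockList n ℓ x' (m + 1) := by
                simp only [hys', hsm]
              rcases hd_cases m with h | h
              · obtain ⟨hm1', _, hdiff⟩ := hd_spec m h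
                have hle : ℓ ≤ m * ℓ := Nat.le_mul_of_pos_left ℓ (by omega)
                rw [hys'v, if_pos h, if_pos h, hBx',
                  seg_drop x' (by omega : δ ≤ ℓ),
                  prefix_win hδ hℓ hC hx hm1' hm1]
                congr 1
                congr 1
                exact bool_resolve (fun hh => hdiff hh.symm)
              · rw [hys'v, if_neg (by omega), if_neg (by omega), List.nil_append, hBx']
                have hsplit : seg n x' (m * ℓ) ℓ =
                    seg n x' (m * ℓ) δ ++ seg n x' (m * ℓ + δ) (ℓ - δ) := by
                  have := seg_split_at x' (m * ℓ) ℓ δ (by omega)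
                  rwa [show ℓ - δ = ℓ - δ from rfl] at this
                rw [hsplit]
                congr 1
                rcases Nat.eq_zero_or_pos m with hm0 | hm0
                · subst hm0
                  apply seg_congr
                  intro t ht
                  simp only [Nat.zero_mul, Nat.zero_add]
                  exact (hpre0 t ht).symm
                · have hle : ℓ ≤ m * ℓ := Nat.le_mul_of_pos_left ℓ (by omega)
                  have hnd : ¬ ¬ bitAt n x (m * ℓ - 1) = bitAt n x' (m * ℓ - 1) := by
                    intro hdiff
                    have := hd_diff m hm0 hm1 hdiff
                    omega
                  rw [prefix_win hδ hℓ hC hx hm0 hm1, prefix_win hδ hℓ hC hx' hm0 hm1]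
                  rw [not_not] at hnd
                  rw [hnd]
            have L2 : ys (m + 1) ++
                (if d (m + 1) = δ then List.replicate δ (bitAt n x' ((m + 1) * ℓ - 1)) else []) =
                seg n x (m * ℓ) δ ++ seg n x' (m * ℓ + δ) (ℓ - δ) := by
              have hSplitR : seg n x' (m * ℓ + δ) (ℓ - δ) =
                  seg n x (m * ℓ + δ) (ℓ - 2 * δ) ++ seg n x' (m * ℓ + ℓ - δ) δ := by
                rw [seg_split_at x' (m * ℓ + δ) (ℓ - δ) (ℓ - 2 * δ) (by omega),
                  show ℓ - δ - (ℓ - 2 * δ) = δ from by omega,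
                  show m * ℓ + δ + (ℓ - 2 * δ) = m * ℓ + ℓ - δ from by omega, ← hMid]
              have hysv : ys (m + 1) =
                  if d (m + 1) = δ then (blockList n ℓ x (m + 1)).take (ℓ - δ)
                  else blockList n ℓ x (m + 1) := by
                simp only [hys]
              rw [hSplitR]
              rcases hd_cases (m + 1) with h | h
              · obtain ⟨_, hm2', hdiff⟩ := hd_spec (m + 1) h
                have hle : ℓ ≤ (m + 1) * ℓ := Nat.le_mul_of_pos_left ℓ (by omega)
                rw [hysv, if_pos h, if_pos h, hBx,
                  seg_take x (by omega : ℓ - δ ≤ ℓ)]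
                have hsplitL : seg n x (m * ℓ) (ℓ - δ) =
                    seg n x (m * ℓ) δ ++ seg n x (m * ℓ + δ) (ℓ - 2 * δ) := by
                  rw [seg_split_at x (m * ℓ) (ℓ - δ) δ (by omega),
                    show ℓ - δ - δ = ℓ - 2 * δ from by omega]
                have hsw : seg n x' (m * ℓ + ℓ - δ) δ =
                    List.replicate δ (bitAt n x' ((m + 1) * ℓ - 1)) := by
                  rw [show m * ℓ + ℓ - δ = (m + 1) * ℓ - δ from by omega]
                  exact suffix_win hδ hℓ hC hx' (by omega) hm2'
                rw [hsplitL, hsw]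
                simp [List.append_assoc]
              · rw [hysv, if_neg (by omega), if_neg (by omega), List.append_nil, hBx]
                have hsplit3 : seg n x (m * ℓ) ℓ =
                    seg n x (m * ℓ) δ ++ seg n x (m * ℓ + δ) (ℓ - 2 * δ) ++
                      seg n x (m * ℓ + ℓ - δ) δ := by
                  rw [seg_split_at x (m * ℓ) ℓ (ℓ - δ) (by omega),
                    show ℓ - (ℓ - δ) = δ from by omega,
                    show m * ℓ + (ℓ - δ) = m * ℓ + ℓ - δ from by omega,
                    seg_split_at x (m * ℓ) (ℓ - δ) δ (by omega),
                    show ℓ - δ - δ = ℓ - 2 * δ from by omega]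
                -- suffix of block m+1 equality between x and x'
                have hsufeq : seg n x (m * ℓ + ℓ - δ) δ = seg n x' (m * ℓ + ℓ - δ) δ := by
                  rcases Nat.lt_or_ge (m + 1) b with hlt | hge
                  · have hnd : ¬ ¬ bitAt n x ((m + 1) * ℓ - 1) = bitAt n x' ((m + 1) * ℓ - 1) := by
                      intro hdiff
                      have := hd_diff (m + 1) (by omega) (by omega) hdiff
                      omega
                    rw [not_not] at hnd
                    rw [show m * ℓ + ℓ - δ = (m + 1) * ℓ - δ from by omega,
                      suffix_win hδ hℓ hC hx (show 1 ≤ m + 1 by omega)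
                        (show m + 1 + 1 ≤ b by omega),
                      suffix_win hδ hℓ hC hx' (show 1 ≤ m + 1 by omega)
                        (show m + 1 + 1 ≤ b by omega),
                      hnd]
                  · have hmb : m + 1 = b := by omega
                    have hmbℓ : m * ℓ + ℓ = b * ℓ := by rw [← hsucc, hmb]
                    apply seg_congr
                    intro t ht
                    rw [show m * ℓ + ℓ - δ + t = b * ℓ - δ + t from by omega]
                    exact hsufb t ht
                rw [hsplit3, hsufeq]
                simp [List.append_assoc]
            rw [L1, L2]
      have hkb := key b le_rfl
      rw [hdb b le_rfl] at hkb
      rw [if_neg (by omega)] at hkb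
      rw [List.append_nil] at hkb
      exact hkb.symm
  -- apply detection
  have hall := hC x hx x' hx' d (fun m => d (m - 1)) y hout1 hout2
  have hzero : ∀ m, m ≤ b → d m = 0 := by
    intro m
    induction m with
    | zero => intro _; exact hd0
    | succ m ih =>
        intro hm
        have h1 := hall (m + 1) (by simp only [Finset.mem_Icc]; omega)
        simp only [Nat.add_sub_cancel] at h1
        rw [h1]
        exact ih (by omega)
  have hbound : ∀ j, 1 ≤ j → j + 1 ≤ b →
      bitAt n x (j * ℓ - 1) = bitAt n x' (j * ℓ - 1) := by
    intro j h1 h2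
    by_contra hdiff
    have := hd_diff j h1 h2 hdiff
    have := hzero j (by omega)
    omega
  -- conclude bitwise equality
  intro i
  by_cases hwin : ∀ j : ℕ, 1 ≤ j → j + 1 ≤ b → i < j * ℓ - δ ∨ j * ℓ + δ ≤ i
  · exact hoff i hwin
  · push_neg at hwin
    obtain ⟨j, hj1, hj2, hw1, hw2⟩ := hwin
    have hle : ℓ ≤ j * ℓ := Nat.le_mul_of_pos_left ℓ (by omega)
    have ha := hbound j hj1 hj2
    rcases Nat.lt_or_ge i (j * ℓ) with hcase | hcase
    · have ht : j * ℓ - 1 - i < δ := by omega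
      have e1 := ws1 hδ hℓ hC hx hj1 hj2 ht
      have e2 := ws1 hδ hℓ hC hx' hj1 hj2 ht
      rw [show j * ℓ - 1 - (j * ℓ - 1 - i) = i from by omega] at e1 e2
      rw [e1, e2, ha]
    · have ht : i - j * ℓ < δ := by omega
      have e1 := ws2 hδ hℓ hC hx hj1 hj2 ht
      have e2 := ws2 hδ hℓ hC hx' hj1 hj2 ht
      rw [show j * ℓ + (i - j * ℓ) = i from by omega] at e1 e2
      rw [e1, e2, ha]

end Inj

/-- Any code detecting up to d deletions per block (b >= 2 blocks)
satisfies |C| <= 2^(n - 2d(b-1)). -/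
theorem redundancy_lower_bound_general
    (n ℓ δ : ℕ) (hδ : 0 < δ) (hℓ : 2 * δ < ℓ) (hℓn : ℓ ≤ n / 2) (hdvd : ℓ ∣ n)
    (hb : 2 ≤ n / ℓ)
    (C : Set (Fin n → Bool)) (hC : Detects n ℓ δ C) :
    C.ncard ≤ 2 ^ (n - 2 * δ * (n / ℓ - 1)) := by
  classical
  have hℓ1 : 1 ≤ ℓ := by omega
  set b := n / ℓ with hbdef
  have hbn : b * ℓ = n := Nat.div_mul_cancel hdvd
  -- window positions
  set W : Finset ℕ := (Finset.Icc 1 (b - 1)).biUnion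
    (fun j => Finset.Ico (j * ℓ - δ) (j * ℓ + δ)) with hW
  have hWlt : ∀ w ∈ W, w < n := by
    intro w hw
    rw [hW, Finset.mem_biUnion] at hw
    obtain ⟨j, hj, hw⟩ := hw
    rw [Finset.mem_Icc] at hj
    rw [Finset.mem_Ico] at hw
    have h1 : j * ℓ + ℓ ≤ b * ℓ := by
      have := Nat.mul_le_mul_right ℓ (show j + 1 ≤ b by omega)
      rwa [Nat.succ_mul] at this
    omega
  have hdisj : ∀ j ∈ Finset.Icc 1 (b - 1), ∀ j' ∈ Finset.Icc 1 (b - 1), j ≠ j' →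
      Disjoint (Finset.Ico (j * ℓ - δ) (j * ℓ + δ)) (Finset.Ico (j' * ℓ - δ) (j' * ℓ + δ)) := by
    intro j hj j' hj' hne
    rw [Finset.mem_Icc] at hj hj'
    rw [Finset.disjoint_left]
    intro a ha ha'
    rw [Finset.mem_Ico] at ha ha'
    rcases Nat.lt_or_ge j j' with h | h
    · have h1 : j * ℓ + ℓ ≤ j' * ℓ := by
        have := Nat.mul_le_mul_right ℓ (show j + 1 ≤ j' by omega)
        rwa [Nat.succ_mul] at this
      have hle : ℓ ≤ j' * ℓ := Nat.le_mul_of_pos_left ℓ (by omega)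
      omega
    · have hne' : j' < j := by omega
      have h1 : j' * ℓ + ℓ ≤ j * ℓ := by
        have := Nat.mul_le_mul_right ℓ (show j' + 1 ≤ j by omega)
        rwa [Nat.succ_mul] at this
      have hle : ℓ ≤ j * ℓ := Nat.le_mul_of_pos_left ℓ (by omega)
      omega
  have hWcard : W.card = (b - 1) * (2 * δ) := by
    rw [hW, Finset.card_biUnion hdisj]
    have hc : ∀ j ∈ Finset.Icc 1 (b - 1), (Finset.Ico (j * ℓ - δ) (j * ℓ + δ)).card = 2 * δ := by
      intro j hj
      rw [Finset.mem_Icc] at hj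
      have hle : ℓ ≤ j * ℓ := Nat.le_mul_of_pos_left ℓ (by omega)
      rw [Nat.card_Ico]
      omega
    rw [Finset.sum_congr rfl hc, Finset.sum_const, Nat.card_Icc, smul_eq_mul]
    simp
  set T : Finset (Fin n) := Finset.univ.filter (fun i => (i : ℕ) ∈ W) with hT
  have hTcard : T.card = (b - 1) * (2 * δ) := by
    rw [← hWcard]
    apply Finset.card_bij (fun (i : Fin n) _ => (i : ℕ))
    · intro i hi
      rw [hT, Finset.mem_filter] at hi
      exact hi.2
    · intro i _ i' _ h
      exact Fin.val_injective h
    · intro w hw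
      exact ⟨⟨w, hWlt w hw⟩, by rw [hT, Finset.mem_filter]; exact ⟨Finset.mem_univ _, hw⟩, rfl⟩
  -- the restriction map
  set Φ : (Fin n → Bool) → ((Tᶜ : Finset (Fin n)) → Bool) :=
    fun x i => x i with hΦ
  have hinj : Set.InjOn Φ C := by
    intro x hx x' hx' heq
    have hoff : ∀ i : ℕ,
        (∀ j : ℕ, 1 ≤ j → j + 1 ≤ n / ℓ → i < j * ℓ - δ ∨ j * ℓ + δ ≤ i) →
        bitAt n x i = bitAt n x' i := by
      intro i hi
      by_cases hin : i < n
      · have hnotW : (⟨i, hin⟩ : Fin n) ∈ Tᶜ := by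
          rw [Finset.mem_compl, hT, Finset.mem_filter]
          rintro ⟨-, hiW⟩
          rw [hW, Finset.mem_biUnion] at hiW
          obtain ⟨j, hj, hiw⟩ := hiW
          rw [Finset.mem_Icc] at hj
          rw [Finset.mem_Ico] at hiw
          have hval : ((⟨i, hin⟩ : Fin n) : ℕ) = i := rfl
          rw [hval] at hiw
          rcases hi j hj.1 (by omega) with h | h <;> omega
        have := congrFun heq ⟨⟨i, hin⟩, hnotW⟩
        simp only [hΦ] at this
        simp only [bitAt, dif_pos hin]
        exact this
      · simp [bitAt, hin]
    have hagree := agree_of_detects hδ hℓ hdvd hb hC hx hx' hoff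
    funext i
    have := hagree i
    simp only [bitAt, dif_pos i.isLt] at this
    simpa using this
  have h1 : C.ncard = (Φ '' C).ncard := (Set.ncard_image_of_injOn hinj).symm
  have h2 : (Φ '' C).ncard ≤ Fintype.card ((Tᶜ : Finset (Fin n)) → Bool) := by
    have := Set.ncard_le_ncard (Set.subset_univ (Φ '' C)) Set.finite_univ
    rwa [Set.ncard_univ, Nat.card_eq_fintype_card] at this
  have h3 : Fintype.card ((Tᶜ : Finset (Fin n)) → Bool) = 2 ^ (n - (b - 1) * (2 * δ)) := by
    rw [Fintype.card_fun, Fintype.card_coe, Finset.card_compl, Fintype.card_fin,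
      Fintype.card_bool, hTcard]
  rw [h1]
  rw [h3] at h2
  calc (Φ '' C).ncard ≤ 2 ^ (n - (b - 1) * (2 * δ)) := h2
    _ ≤ 2 ^ (n - 2 * δ * (b - 1)) := by
        apply Nat.pow_le_pow_right (by omega)
        have : (b - 1) * (2 * δ) = 2 * δ * (b - 1) := by ring
        omega
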